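/- Let G be a finite simple graph on [n] = {1,…,n} such that the complement G^c is a forest, the vertex set of each connected component of G^c is a set of consecutive integers, and 1,2,…,n is a perfect elimination order of G^c. Then for every k ≥ 0 the k-th homological shift ideal HS_k(I(G)) ⊆ K[x_1,…,x_n] has linear quotients. -/

import Mathlib

open MvPolynomial

/-- An ideal of `K[x_1,…,x_n]` is *generated by variables* if it is the span of the
image of a subset of the variables. -/
def genByVars {K : Type*} [Field K] {n : ℕ} (I : Ideal (MvPolynomial (Fin n) K)) : Prop :=
  ∃ T : Set (Fin n), I = Ideal.span (MvPolynomial.X '' T)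
/-- A polynomial is a monomial (with coefficient `1`). -/
def IsMonomialElt {K : Type*} [Field K] {n : ℕ} (p : MvPolynomial (Fin n) K) : Prop :=
  ∃ a : Fin n →₀ ℕ, p = MvPolynomial.monomial a 1
/-- A monomial ideal has *linear quotients* if its minimal monomial generators admit an
ordering `u 0, u 1, …` such that each colon ideal `(u_0,…,u_{i-1}) : u_i` is generated by a
subset of the variables.  (The conditions that the `u i` are monomials, pairwise
non-dividing, and generate `I` say exactly that they are the minimal monomial generators
of `I`.) -/
def HasLinearQuotients {K : Type*} [Field K] {n : ℕ}
    (I : Ideal (MvPolynomial (Fin n) K)) : Prop :=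
  ∃ (m : ℕ) (u : Fin m → MvPolynomial (Fin n) K),
    (∀ i, IsMonomialElt (u i)) ∧
    (∀ i j, i ≠ j → ¬ u i ∣ u j) ∧
    Ideal.span (Set.range u) = I ∧
    ∀ i : Fin m,
      genByVars ((Ideal.span (u '' {j | j < i})).colon (Ideal.span {u i}))
/-- The natural ordering `1, 2, …, n` of the vertices is a perfect elimination order of
`H`: for each vertex, its neighbourhood among the later vertices is a clique. -/
def natPEO {n : ℕ} (H : SimpleGraph (Fin n)) : Prop :=
  ∀ i j k : Fin n, i < j → i < k → j ≠ k → H.Adj i j → H.Adj i k → H.Adj j k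

/-- The reversed ordering `n, n-1, …, 1` of the vertices is a perfect elimination order of
`H`: for each vertex, its neighbourhood among the earlier-labelled vertices is a clique. -/
def revPEO {n : ℕ} (H : SimpleGraph (Fin n)) : Prop :=
  ∀ i j k : Fin n, j < i → k < i → j ≠ k → H.Adj i j → H.Adj i k → H.Adj j k
/-- The generating monomials of the `k`-th homological shift ideal `HS_k(I(G))`:
all monomials `x_A x_B` with `A, B` nonempty, `max A < min B`, `|A ∪ B| = k + 2` and
`{max A, b} ∈ E(G)` for all `b ∈ B`. -/
def HSgens (K : Type*) [Field K] {n : ℕ} (G : SimpleGraph (Fin n)) (k : ℕ) :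
    Set (MvPolynomial (Fin n) K) :=
  {w | ∃ A B : Finset (Fin n), A.Nonempty ∧ B.Nonempty ∧
    (∀ a ∈ A, ∀ b ∈ B, a < b) ∧ (A ∪ B).card = k + 2 ∧
    (∃ a0 ∈ A, (∀ a ∈ A, a ≤ a0) ∧ ∀ b ∈ B, G.Adj a0 b) ∧
    w = (∏ i ∈ A, MvPolynomial.X i) * ∏ i ∈ B, MvPolynomial.X i}
namespace HSaux

variable {n : ℕ}

def wt (n : ℕ) (i : Fin n) : ℕ := 2 ^ (n - 1 - (i : ℕ))

def kappa (S : Finset (Fin n)) : ℕ := ∑ i ∈ S, wt n i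

lemma sum_two_pow (m : ℕ) : ∑ y ∈ Finset.range m, 2 ^ y = 2 ^ m - 1 := by
  induction m with
  | zero => simp
  | succ k ih => rw [Finset.sum_range_succ, ih]; have := Nat.one_le_two_pow (n := k); omega

lemma kappa_lt {S T : Finset (Fin n)} {d : Fin n} (hdT : d ∈ T) (hdS : d ∉ S)
    (h : ∀ x ∈ S, x ∉ T → d < x) : kappa S < kappa T := by
  classical
  have hsplit : kappa S = kappa (S ∩ T) + kappa (S \ T) := by
    rw [kappa, kappa, kappa, ← Finset.sum_union (Finset.disjoint_of_subset_left
      (Finset.inter_subset_right) Finset.sdiff_disjoint.symm)]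
    congr 1
    rw [Finset.union_comm, Finset.sdiff_union_inter]
  have hsub : insert d (S ∩ T) ⊆ T := by
    intro x hx
    rcases Finset.mem_insert.mp hx with rfl | hx
    · exact hdT
    · exact (Finset.mem_inter.mp hx).2
  have hTge : kappa (S ∩ T) + wt n d ≤ kappa T := by
    have : kappa (insert d (S ∩ T)) ≤ kappa T :=
      Finset.sum_le_sum_of_subset hsub
    rwa [kappa, Finset.sum_insert (fun hd => hdS (Finset.mem_inter.mp hd).1), add_comm] at this
  have hsd : kappa (S \ T) < wt n d := by
    have himg : (S \ T).image (fun x : Fin n => n - 1 - (x : ℕ)) ⊆ Finset.range (n - 1 - (d : ℕ)) := by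
      intro y hy
      obtain ⟨x, hx, rfl⟩ := Finset.mem_image.mp hy
      have hxd : d < x := h x (Finset.mem_sdiff.mp hx).1 (Finset.mem_sdiff.mp hx).2
      have h1 : (x : ℕ) < n := x.isLt
      have h2 : (d : ℕ) < (x : ℕ) := hxd
      exact Finset.mem_range.mpr (by omega)
    have hinj : ∀ x ∈ S \ T, ∀ y ∈ S \ T, n - 1 - (x : ℕ) = n - 1 - (y : ℕ) → x = y := by
      intro x _ y _ hxy
      have h1 : (x : ℕ) < n := x.isLt
      have h2 : (y : ℕ) < n := y.isLt
      exact Fin.ext (by omega)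
    calc kappa (S \ T) = ∑ y ∈ (S \ T).image (fun x : Fin n => n - 1 - (x : ℕ)), 2 ^ y := by
          rw [Finset.sum_image hinj]; rfl
      _ ≤ ∑ y ∈ Finset.range (n - 1 - (d : ℕ)), 2 ^ y := Finset.sum_le_sum_of_subset himg
      _ = 2 ^ (n - 1 - (d : ℕ)) - 1 := sum_two_pow _
      _ < wt n d := by have := Nat.one_le_two_pow (n := n - 1 - (d : ℕ)); unfold wt; omega
  omega

lemma kappa_injective {S T : Finset (Fin n)} (h : kappa S = kappa T) : S = T := by
  classical
  by_contra hne
  have hΔ : ((S \ T) ∪ (T \ S)).Nonempty := by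
    rcases Finset.eq_empty_or_nonempty ((S \ T) ∪ (T \ S)) with he | hne'
    · exact absurd (Finset.Subset.antisymm
        (Finset.sdiff_eq_empty_iff_subset.mp (Finset.union_eq_empty.mp he).1)
        (Finset.sdiff_eq_empty_iff_subset.mp (Finset.union_eq_empty.mp he).2)) hne
    · exact hne'
  set d := ((S \ T) ∪ (T \ S)).min' hΔ with hd
  have hdmem := ((S \ T) ∪ (T \ S)).min'_mem hΔ
  rcases Finset.mem_union.mp hdmem with hds | hdt
  · have := kappa_lt (Finset.mem_sdiff.mp hds).1 (Finset.mem_sdiff.mp hds).2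
      (fun x hxT hxS => lt_of_le_of_ne
        (Finset.min'_le _ _ (Finset.mem_union.mpr (Or.inr (Finset.mem_sdiff.mpr ⟨hxT, hxS⟩))))
        (fun he => (Finset.mem_sdiff.mp hds).2 (he ▸ hxT)))
    omega
  · have := kappa_lt (Finset.mem_sdiff.mp hdt).1 (Finset.mem_sdiff.mp hdt).2
      (fun x hxS hxT => lt_of_le_of_ne
        (Finset.min'_le _ _ (Finset.mem_union.mpr (Or.inl (Finset.mem_sdiff.mpr ⟨hxS, hxT⟩))))
        (fun he => (Finset.mem_sdiff.mp hdt).2 (he ▸ hxS)))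
    omega

/-- If `kappa S < kappa T` then there is `t ∈ T \ S` below all of `S \ T`. -/
lemma exists_lead {S T : Finset (Fin n)} (h : kappa S < kappa T) :
    ∃ t, t ∈ T ∧ t ∉ S ∧ ∀ x ∈ S, x ∉ T → t < x := by
  classical
  have hne : S ≠ T := fun he => by rw [he] at h; omega
  have hΔ : ((S \ T) ∪ (T \ S)).Nonempty := by
    rcases Finset.eq_empty_or_nonempty ((S \ T) ∪ (T \ S)) with he | hne'
    · exact absurd (Finset.Subset.antisymm
        (Finset.sdiff_eq_empty_iff_subset.mp (Finset.union_eq_empty.mp he).1)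
        (Finset.sdiff_eq_empty_iff_subset.mp (Finset.union_eq_empty.mp he).2)) hne
    · exact hne'
  have hdmem := ((S \ T) ∪ (T \ S)).min'_mem hΔ
  set d := ((S \ T) ∪ (T \ S)).min' hΔ with hd
  rcases Finset.mem_union.mp hdmem with hds | hdt
  · exfalso
    have := kappa_lt (Finset.mem_sdiff.mp hds).1 (Finset.mem_sdiff.mp hds).2
      (fun x hxT hxS => lt_of_le_of_ne
        (Finset.min'_le _ _ (Finset.mem_union.mpr (Or.inr (Finset.mem_sdiff.mpr ⟨hxT, hxS⟩))))
        (fun he => (Finset.mem_sdiff.mp hds).2 (he ▸ hxT)))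
    omega
  · exact ⟨d, (Finset.mem_sdiff.mp hdt).1, (Finset.mem_sdiff.mp hdt).2,
      fun x hxS hxT => lt_of_le_of_ne
        (Finset.min'_le _ _ (Finset.mem_union.mpr (Or.inl (Finset.mem_sdiff.mpr ⟨hxS, hxT⟩))))
        (fun he => (Finset.mem_sdiff.mp hdt).2 (he ▸ hxS))⟩

variable {n : ℕ}

noncomputable def eS (S : Finset (Fin n)) : Fin n →₀ ℕ := ∑ i ∈ S, Finsupp.single i 1

lemma eS_apply (S : Finset (Fin n)) (j : Fin n) : eS S j = if j ∈ S then 1 else 0 := by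
  classical
  rw [eS, Finsupp.finset_sum_apply]
  simp [Finsupp.single_apply]

lemma eS_le {S T : Finset (Fin n)} : eS S ≤ eS T ↔ S ⊆ T := by
  classical
  constructor
  · intro h x hx
    have := h x
    rw [eS_apply, eS_apply] at this
    simp only [hx, if_true] at this
    by_contra hxT
    simp [hxT] at this
  · intro h x
    rw [eS_apply, eS_apply]
    by_cases hx : x ∈ S
    · simp [hx, h hx]
    · simp [hx]

lemma eS_exchange {S : Finset (Fin n)} {t s : Fin n} (htS : t ∉ S) (hsS : s ∈ S) :
    eS (insert t (S.erase s)) + Finsupp.single s 1 = eS S + Finsupp.single t 1 := by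
  classical
  have hst : s ≠ t := fun h => htS (h ▸ hsS)
  ext j
  simp only [Finsupp.add_apply, eS_apply, Finsupp.single_apply, Finset.mem_insert,
    Finset.mem_erase]
  rcases eq_or_ne j t with rfl | h1
  · rw [if_pos (Or.inl rfl), if_neg hst, if_neg htS, if_pos rfl]
    omega
  · rcases eq_or_ne j s with rfl | h2
    · rw [if_neg (by rintro (h | ⟨h, -⟩); exact hst h; exact h rfl), if_pos rfl,
        if_pos hsS, if_neg (fun h : t = j => h1 h.symm)]
      omega
    · by_cases h3 : j ∈ S
      · rw [if_pos (Or.inr ⟨h2, h3⟩), if_neg (fun h : s = j => h2 h.symm), if_pos h3,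
          if_neg (fun h : t = j => h1 h.symm)]
      · rw [if_neg (by rintro (h | ⟨-, h⟩); exact h1 h; exact h3 h),
          if_neg (fun h : s = j => h2 h.symm), if_neg h3,
          if_neg (fun h : t = j => h1 h.symm)]

lemma prod_X_eq (K : Type*) [Field K] (S : Finset (Fin n)) :
    (∏ i ∈ S, (X i : MvPolynomial (Fin n) K)) = monomial (eS S) 1 := by
  classical
  induction S using Finset.induction_on with
  | empty => simp [eS, MvPolynomial.monomial_zero']
  | @insert a s ha ih =>
    have h1 : eS (insert a s) = Finsupp.single a 1 + eS s := by
      rw [eS, eS, Finset.sum_insert ha]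
    rw [Finset.prod_insert ha, ih, h1,
      show (X a : MvPolynomial (Fin n) K) = monomial (Finsupp.single a 1) 1 from rfl,
      monomial_mul, one_mul]

/-- The witness predicate defining the generating family. -/
abbrev Pw (G : SimpleGraph (Fin n)) (S : Finset (Fin n)) : Prop :=
  ∃ a ∈ S, (∃ m ∈ S, a < m) ∧ ∀ b ∈ S, a < b → G.Adj a b

lemma exchange {G : SimpleGraph (Fin n)}
    (hU : ∀ a b c : Fin n, a < b → a < c → ¬G.Adj a b → ¬G.Adj a c → b = c)
    {S T : Finset (Fin n)} (hcard : T.card = S.card)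
    (hS : Pw G S) (hT : Pw G T) {t : Fin n} (htT : t ∈ T) (htS : t ∉ S)
    (hlt : ∀ x ∈ S, x ∉ T → t < x) :
    ∃ s ∈ S, t < s ∧ Pw G (insert t (S.erase s)) := by
  classical
  have hSne : S.Nonempty := by
    rcases Finset.eq_empty_or_nonempty S with h | h
    · rw [h, Finset.card_empty, Finset.card_eq_zero] at hcard
      exact absurd (hcard ▸ htT) (Finset.notMem_empty t)
    · exact h
  set M := S.max' hSne with hM
  have hMS : M ∈ S := S.max'_mem hSne
  have hSTne : ∃ x ∈ S, x ∉ T := by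
    by_contra h
    push_neg at h
    exact htS ((Finset.eq_of_subset_of_card_le h (le_of_eq hcard)) ▸ htT)
  obtain ⟨x0, hx0S, hx0T⟩ := hSTne
  have htM : t < M := lt_of_lt_of_le (hlt x0 hx0S hx0T) (S.le_max' x0 hx0S)
  obtain ⟨a, haS, ⟨m0, hm0S, ham0⟩, hadj⟩ := hS
  have haM : a < M := lt_of_lt_of_le ham0 (S.le_max' _ hm0S)
  have hat : a ≠ t := fun h => htS (h ▸ haS)
  by_cases hc : ∃ c ∈ S, t < c ∧ c < M
  · obtain ⟨c, hcS, htc, hcM⟩ := hc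
    by_cases hB : a < t ∧ ¬ G.Adj a t
    · -- witness `t` will work; "f(a) = t"
      by_cases hft : ∃ b ∈ S, t < b ∧ ¬ G.Adj t b
      · obtain ⟨b, hbS, htb, hnadj⟩ := hft
        refine ⟨b, hbS, htb, t, Finset.mem_insert_self _ _, ?_, ?_⟩
        · by_cases hbM : b = M
          · exact ⟨c, Finset.mem_insert_of_mem (Finset.mem_erase.mpr
              ⟨fun h => absurd (hbM ▸ h ▸ hcM) (lt_irrefl _), hcS⟩), htc⟩
          · exact ⟨M, Finset.mem_insert_of_mem (Finset.mem_erase.mpr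
              ⟨fun h => hbM h.symm, hMS⟩), htM⟩
        · intro x hx htx
          rcases Finset.mem_insert.mp hx with rfl | hx'
          · exact absurd htx (lt_irrefl _)
          · by_contra hna
            exact (Finset.mem_erase.mp hx').1 (hU t x b htx htb hna hnadj)
      · push_neg at hft
        refine ⟨M, hMS, htM, t, Finset.mem_insert_self _ _,
          ⟨c, Finset.mem_insert_of_mem (Finset.mem_erase.mpr ⟨ne_of_lt hcM, hcS⟩), htc⟩, ?_⟩
        intro x hx htx
        rcases Finset.mem_insert.mp hx with rfl | hx'
        · exact absurd htx (lt_irrefl _)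
        · exact hft x (Finset.mem_of_mem_erase hx') htx
    · -- witness `a` survives unless forced; "f(a) ≠ t"
      have ha_t : a < t → G.Adj a t := by
        intro h
        by_contra h'
        exact hB ⟨h, h'⟩
      by_cases hs : ∃ s ∈ S, t < s ∧ s ≠ a ∧ s ≠ M
      · obtain ⟨s, hsS, hts, hsa, hsM⟩ := hs
        refine ⟨s, hsS, hts, a,
          Finset.mem_insert_of_mem (Finset.mem_erase.mpr ⟨fun h => hsa h.symm, haS⟩),
          ⟨M, Finset.mem_insert_of_mem (Finset.mem_erase.mpr ⟨fun h => hsM h.symm, hMS⟩), haM⟩, ?_⟩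
        intro x hx hax
        rcases Finset.mem_insert.mp hx with rfl | hx'
        · exact ha_t hax
        · exact hadj x (Finset.mem_of_mem_erase hx') hax
      · push_neg at hs
        have hca : c = a := by
          by_contra h
          exact absurd (hs c hcS htc h) (ne_of_lt hcM)
        have hta : t < a := hca ▸ htc
        have hG : ∀ x ∈ S, t < x → x = a ∨ x = M := by
          intro x hx htx
          by_cases h : x = a
          · exact Or.inl h
          · exact Or.inr (hs x hx htx h)
        by_cases hftM : G.Adj t M
        · refine ⟨a, haS, hta, t, Finset.mem_insert_self _ _,
            ⟨M, Finset.mem_insert_of_mem (Finset.mem_erase.mpr ⟨ne_of_gt haM, hMS⟩), htM⟩, ?_⟩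
          intro x hx htx
          rcases Finset.mem_insert.mp hx with rfl | hx'
          · exact absurd htx (lt_irrefl _)
          · rcases hG x (Finset.mem_of_mem_erase hx') htx with rfl | rfl
            · exact absurd rfl (Finset.mem_erase.mp hx').1
            · exact hftM
        · have hta' : G.Adj t a := by
            by_contra h
            exact (ne_of_lt haM) (hU t a M hta htM h hftM)
          refine ⟨M, hMS, htM, t, Finset.mem_insert_self _ _,
            ⟨a, Finset.mem_insert_of_mem (Finset.mem_erase.mpr ⟨ne_of_lt haM, haS⟩), hta⟩, ?_⟩
          intro x hx htx
          rcases Finset.mem_insert.mp hx with rfl | hx'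
          · exact absurd htx (lt_irrefl _)
          · rcases hG x (Finset.mem_of_mem_erase hx') htx with rfl | rfl
            · exact hta'
            · exact absurd rfl (Finset.mem_erase.mp hx').1
  · -- fallback: `S \ T = {M}` and `T = insert t (S.erase M)`
    push_neg at hc
    have hST : ∀ x ∈ S, x ∉ T → x = M := by
      intro x hxS hxT
      have h1 := hlt x hxS hxT
      have h2 := S.le_max' x hxS
      rcases lt_or_eq_of_le h2 with h | h
      · exact absurd h (not_lt.mpr (hc x hxS h1))
      · exact h
    have hMT : M ∉ T := by
      intro hMT
      have hsub : S ⊆ T := by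
        intro x hx
        by_cases h : x ∈ T
        · exact h
        · exact (hST x hx h) ▸ hMT
      exact htS ((Finset.eq_of_subset_of_card_le hsub (le_of_eq hcard)) ▸ htT)
    have hInsert : insert t (S.erase M) = T := by
      apply Finset.eq_of_subset_of_card_le
      · intro x hx
        rcases Finset.mem_insert.mp hx with rfl | hx'
        · exact htT
        · obtain ⟨hxM, hxS⟩ := Finset.mem_erase.mp hx'
          by_contra h
          exact hxM (hST x hxS h)
      · rw [hcard, Finset.card_insert_of_notMem
          (fun h => htS (Finset.mem_of_mem_erase h)), Finset.card_erase_of_mem hMS]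
        have : 1 ≤ S.card := Finset.card_pos.mpr hSne
        omega
    exact ⟨M, hMS, htM, hInsert ▸ hT⟩


variable {n : ℕ}


lemma uniq_upper {G : SimpleGraph (Fin n)} (hforest : Gᶜ.IsAcyclic)
    (hPEO : natPEO Gᶜ) :
    ∀ a b c : Fin n, a < b → a < c → ¬G.Adj a b → ¬G.Adj a c → b = c := by
  intro a b c hab hac h1 h2
  by_contra hbc
  have e1 : Gᶜ.Adj a b := ⟨ne_of_lt hab, h1⟩
  have e2 : Gᶜ.Adj a c := ⟨ne_of_lt hac, h2⟩
  have e3 : Gᶜ.Adj b c := hPEO a b c hab hac hbc e1 e2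
  have huniq := SimpleGraph.isAcyclic_iff_path_unique.mp hforest
  let p1 : Gᶜ.Path b c := SimpleGraph.Path.singleton e3
  have hw2 : (SimpleGraph.Walk.cons e1.symm (SimpleGraph.Walk.cons e2
      SimpleGraph.Walk.nil) : Gᶜ.Walk b c).IsPath := by
    simp [SimpleGraph.Walk.isPath_def]
    exact ⟨⟨fun h => (Gᶜ.loopless.irrefl a) (h ▸ e1.symm), hbc⟩, fun h => (Gᶜ.loopless.irrefl a) (h ▸ e2)⟩
  have heq := huniq p1 ⟨_, hw2⟩
  have hlen : (p1 : Gᶜ.Walk b c).length =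
      (SimpleGraph.Walk.cons e1.symm (SimpleGraph.Walk.cons e2
        SimpleGraph.Walk.nil) : Gᶜ.Walk b c).length := by
    rw [heq]
  simp [p1, SimpleGraph.Path.singleton] at hlen

lemma HSgens_eq (K : Type*) [Field K] {n : ℕ} (G : SimpleGraph (Fin n)) (k : ℕ) :
    HSgens K G k = (fun S => (monomial (eS S) 1 : MvPolynomial (Fin n) K)) ''
      {S : Finset (Fin n) | S.card = k + 2 ∧ Pw G S} := by
  classical
  ext w
  constructor
  · rintro ⟨A, B, hA, hB, hAB, hcard, ⟨a0, ha0A, hmax, hadj⟩, rfl⟩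
    have hdisj : Disjoint A B := by
      rw [Finset.disjoint_left]
      intro x hxA hxB
      exact absurd (hAB x hxA x hxB) (lt_irrefl x)
    refine ⟨A ∪ B, ⟨hcard, a0, Finset.mem_union_left _ ha0A, ?_, ?_⟩, ?_⟩
    · obtain ⟨b, hb⟩ := hB
      exact ⟨b, Finset.mem_union_right _ hb, hAB a0 ha0A b hb⟩
    · intro b hb hab
      rcases Finset.mem_union.mp hb with h | h
      · exact absurd hab (not_lt.mpr (hmax b h))
      · exact hadj b h
    · rw [← Finset.prod_union hdisj, prod_X_eq]
  · rintro ⟨S, ⟨hcard, a, haS, ⟨m0, hm0S, ham0⟩, hadj⟩, rfl⟩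
    refine ⟨S.filter (· ≤ a), S.filter (fun x => ¬ x ≤ a), ⟨a, by simp [haS]⟩,
      ⟨m0, by simp [hm0S, ham0]⟩, ?_, ?_, ⟨a, by simp [haS], ?_, ?_⟩, ?_⟩
    · intro x hx y hy
      exact lt_of_le_of_lt (Finset.mem_filter.mp hx).2
        (not_le.mp (Finset.mem_filter.mp hy).2)
    · rw [Finset.filter_union_filter_not_eq]; exact hcard
    · intro x hx; exact (Finset.mem_filter.mp hx).2
    · intro b hb
      exact hadj b (Finset.mem_filter.mp hb).1 (not_le.mp (Finset.mem_filter.mp hb).2)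
    · rw [← Finset.prod_union (Finset.disjoint_filter_filter_not S S _),
        Finset.filter_union_filter_not_eq, prod_X_eq]

end HSaux

/-- **Theorem 3.1 (Ficarra–Herzog).**  Let `G` be a graph on `Fin n` such that `Gᶜ` is a
forest, the vertex set of every connected component of `Gᶜ` is a set of consecutive
integers, and the natural order is a perfect elimination order of `Gᶜ`.  Then every
homological shift ideal `HS_k(I(G))` has linear quotients. -/
theorem HS_k_linearQuotients_of_forest_complement
    {K : Type*} [Field K] {n : ℕ} (G : SimpleGraph (Fin n))
    (hforest : Gᶜ.IsAcyclic)
    (hconsec : ∀ u v w : Fin n, u ≤ v → v ≤ w → Gᶜ.Reachable u w → Gᶜ.Reachable u v)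
    (hPEO : natPEO Gᶜ) :
    ∀ k : ℕ, HasLinearQuotients (Ideal.span (HSgens K G k)) := by
  intro k
  classical
  open HSaux in
  have hU := HSaux.uniq_upper hforest hPEO
  let F : Finset (Finset (Fin n)) :=
    Finset.univ.filter (fun S => S.card = k + 2 ∧ HSaux.Pw G S)
  let r : Finset (Fin n) → Finset (Fin n) → Prop := fun S T => HSaux.kappa T ≤ HSaux.kappa S
  haveI : DecidableRel r := fun _ _ => Nat.decLe _ _
  haveI : IsTrans (Finset (Fin n)) r := ⟨fun _ _ _ h1 h2 => le_trans h2 h1⟩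
  haveI : Std.Antisymm r :=
    ⟨fun S T h1 h2 => HSaux.kappa_injective (le_antisymm h2 h1)⟩
  haveI : Std.Total r := ⟨fun S T => (le_total (HSaux.kappa T) (HSaux.kappa S)).imp id id⟩
  let l : List (Finset (Fin n)) := F.sort r
  have hmem : ∀ S, S ∈ l ↔ (S.card = k + 2 ∧ HSaux.Pw G S) := by
    intro S
    show S ∈ F.sort r ↔ _
    rw [Finset.mem_sort]
    simp [F]
  have hnodup : l.Nodup := Finset.sort_nodup (s := F) (r := r)
  have hsorted : l.Pairwise r := Finset.pairwise_sort (s := F) (r := r)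
  have hgetinj : Function.Injective l.get := List.nodup_iff_injective_get.mp hnodup
  have hkap : ∀ i j : Fin l.length, i < j → HSaux.kappa (l.get j) < HSaux.kappa (l.get i) := by
    intro i j hij
    have h1 : r (l.get i) (l.get j) := hsorted.rel_get_of_lt hij
    exact lt_of_le_of_ne h1 (fun h => (ne_of_lt hij) (hgetinj (HSaux.kappa_injective h.symm)))
  refine ⟨l.length, fun i => monomial (HSaux.eS (l.get i)) 1, fun i => ⟨_, rfl⟩, ?_, ?_, ?_⟩
  · -- pairwise non-dividing
    intro i j hij hdvd
    rw [monomial_dvd_monomial] at hdvd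
    have hle : HSaux.eS (l.get i) ≤ HSaux.eS (l.get j) := by
      rcases hdvd.1 with h | h
      · exact absurd h one_ne_zero
      · exact h
    have hci : (l.get i).card = k + 2 := ((hmem _).mp (l.get_mem i)).1
    have hcj : (l.get j).card = k + 2 := ((hmem _).mp (l.get_mem j)).1
    have : l.get i = l.get j :=
      Finset.eq_of_subset_of_card_le (HSaux.eS_le.mp hle) (by omega)
    exact hij (hgetinj this)
  · -- spans agree
    rw [HSaux.HSgens_eq]
    congr 1
    ext w
    simp only [Set.mem_range, Set.mem_image, Set.mem_setOf_eq]
    constructor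
    · rintro ⟨i, rfl⟩
      exact ⟨l.get i, (hmem _).mp (l.get_mem i), rfl⟩
    · rintro ⟨S, hS, rfl⟩
      obtain ⟨i, hi⟩ := List.mem_iff_get.mp ((hmem S).mpr hS)
      exact ⟨i, by rw [hi]⟩
  · -- colon ideals generated by variables
    intro i
    have hSiF := (hmem _).mp (l.get_mem i)
    set J : Ideal (MvPolynomial (Fin n) K) :=
      Ideal.span ((fun j => (monomial (HSaux.eS (l.get j)) 1 : MvPolynomial (Fin n) K)) ''
        {j | j < i}) with hJdef
    have hJE : (fun j => (monomial (HSaux.eS (l.get j)) 1 : MvPolynomial (Fin n) K)) ''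
        {j | j < i} = (fun s => (monomial s 1 : MvPolynomial (Fin n) K)) ''
          ((fun j : Fin l.length => HSaux.eS (l.get j)) '' {j | j < i}) := by
      rw [Set.image_image]
    refine ⟨{t | (X t : MvPolynomial (Fin n) K) * monomial (HSaux.eS (l.get i)) 1 ∈ J}, ?_⟩
    apply le_antisymm
    · intro p hp
      have hpu : p * monomial (HSaux.eS (l.get i)) 1 ∈ J := Ideal.mem_colon_span_singleton.mp hp
      rw [MvPolynomial.mem_ideal_span_X_image]
      intro d hd
      have hds : d + HSaux.eS (l.get i) ∈ (p * monomial (HSaux.eS (l.get i)) 1).support := by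
        rw [MvPolynomial.mem_support_iff, MvPolynomial.coeff_mul_monomial, mul_one]
        exact MvPolynomial.mem_support_iff.mp hd
      rw [hJdef, hJE] at hpu
      obtain ⟨sj, hsjE, hle⟩ := MvPolynomial.mem_ideal_span_monomial_image.mp hpu _ hds
      obtain ⟨jj, hjj, rfl⟩ := hsjE
      have hTjF := (hmem _).mp (l.get_mem jj)
      have hkapji : HSaux.kappa (l.get i) < HSaux.kappa (l.get jj) := hkap jj i hjj
      obtain ⟨t, htT, htS, hlt⟩ := HSaux.exists_lead hkapji
      obtain ⟨s, hsS, hts, hPw'⟩ := HSaux.exchange hU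
        (hTjF.1.trans hSiF.1.symm) hSiF.2 hTjF.2 htT htS hlt
      have hcard' : (insert t ((l.get i).erase s)).card = k + 2 := by
        rw [Finset.card_insert_of_notMem (fun h => htS (Finset.mem_of_mem_erase h)),
          Finset.card_erase_of_mem hsS, hSiF.1]
        omega
      have hS'mem : insert t ((l.get i).erase s) ∈ l := (hmem _).mpr ⟨hcard', hPw'⟩
      obtain ⟨j', hj'⟩ := List.mem_iff_get.mp hS'mem
      have hkap' : HSaux.kappa (l.get i) < HSaux.kappa (insert t ((l.get i).erase s)) := by
        refine HSaux.kappa_lt (Finset.mem_insert_self _ _) htS ?_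
        intro x hxSi hxS'
        have hxs : x = s := by
          by_contra hxs
          exact hxS' (Finset.mem_insert_of_mem (Finset.mem_erase.mpr ⟨hxs, hxSi⟩))
        exact hxs ▸ hts
      have hj'i : j' < i := by
        rcases lt_trichotomy j' i with h | h | h
        · exact h
        · exfalso
          rw [← hj', h] at hkap'
          exact lt_irrefl _ hkap'
        · exfalso
          have := hkap i j' h
          rw [hj'] at this
          omega
      refine ⟨t, ?_, ?_⟩
      · show (X t : MvPolynomial (Fin n) K) * monomial (HSaux.eS (l.get i)) 1 ∈ J
        have hXt : (X t : MvPolynomial (Fin n) K) * monomial (HSaux.eS (l.get i)) 1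
            = monomial (HSaux.eS (insert t ((l.get i).erase s))) 1 * (X s) := by
          rw [show (X t : MvPolynomial (Fin n) K) = monomial (Finsupp.single t 1) 1 from rfl,
            show (X s : MvPolynomial (Fin n) K) = monomial (Finsupp.single s 1) 1 from rfl,
            monomial_mul, monomial_mul, one_mul]
          congr 1
          rw [add_comm (Finsupp.single t 1) (HSaux.eS (l.get i)), ← HSaux.eS_exchange htS hsS,
            add_comm]
        rw [hXt]
        refine Ideal.mul_mem_right _ _ (Ideal.subset_span ⟨j', hj'i, ?_⟩)
        show (monomial (HSaux.eS (l.get j')) 1 : MvPolynomial (Fin n) K) = _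
        rw [hj']
      · have h1 := hle t
        rw [Finsupp.add_apply, HSaux.eS_apply, HSaux.eS_apply, if_pos htT, if_neg htS] at h1
        omega
    · rw [Ideal.span_le]
      rintro x ⟨t, ht, rfl⟩
      rw [SetLike.mem_coe, Ideal.mem_colon_span_singleton]
      exact ht
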